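/- arXiv:0712.3425 — 5 statements merged into one kernel-verified Lean document; each statement's English description precedes it below -/
import Mathlib

section
/- For all real constants c₁, c₂, the function u : ℝ² → ℝ defined by u(t,x) = c₁·exp(t−x) + c₂·exp(t+x) + c₁² + c₂² satisfies the heat equation ∂_t u = ∂_x² u everywhere, and also satisfies the nonlinear first-order constraint ((∂_t u)² + (∂_x u)²)·cosh(2x) − 2·(∂_t u)·(∂_x u)·sinh(2x) + 2·exp(2t)·(∂_t u − u) = 0 everywhere. (This exhibits a nonlinear compatible differential constraint for a linear second-order PDE, contradicting Olver's claim that compatible constraints of linear second-order equations must be linear.) -/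
/-- For all constants `c₁, c₂`, the function
`u(t,x) = c₁·exp(t−x) + c₂·exp(t+x) + c₁² + c₂²` satisfies the heat equation
`∂_t u = ∂_x² u` and the nonlinear first-order constraint
`(u_t² + u_x²)·cosh(2x) − 2·u_t·u_x·sinh(2x) + 2·e^{2t}·(u_t − u) = 0`. -/
theorem stmt_2 (c₁ c₂ : ℝ)
    (u : ℝ → ℝ → ℝ)
    (hu : ∀ t x : ℝ, u t x = c₁ * Real.exp (t - x) + c₂ * Real.exp (t + x) + c₁ ^ 2 + c₂ ^ 2) :
    ∀ t x : ℝ,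
      deriv (fun s => u s x) t = deriv (deriv (fun y => u t y)) x ∧
      ((deriv (fun s => u s x) t) ^ 2 + (deriv (fun y => u t y) x) ^ 2)
          * Real.cosh (2 * x)
        - 2 * (deriv (fun s => u s x) t) * (deriv (fun y => u t y) x)
          * Real.sinh (2 * x)
        + 2 * Real.exp (2 * t) * (deriv (fun s => u s x) t - u t x) = 0 := by
  intro t x
  have hT : ∀ t x : ℝ, HasDerivAt (fun s => u s x)
      (c₁ * Real.exp (t - x) + c₂ * Real.exp (t + x)) t := by
    intro t x
    have he : (fun s => u s x)
        = fun s => c₁ * Real.exp (s - x) + c₂ * Real.exp (s + x) + c₁ ^ 2 + c₂ ^ 2 :=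
      funext fun s => hu s x
    rw [he]
    have h1 : HasDerivAt (fun s : ℝ => s - x) 1 t := (hasDerivAt_id t).sub_const x
    have h2 : HasDerivAt (fun s : ℝ => s + x) 1 t := (hasDerivAt_id t).add_const x
    have := (((h1.exp.const_mul c₁).add (h2.exp.const_mul c₂)).add_const (c₁ ^ 2)).add_const
      (c₂ ^ 2)
    simpa using this
  have hX : ∀ t x : ℝ, HasDerivAt (fun y => u t y)
      (-(c₁ * Real.exp (t - x)) + c₂ * Real.exp (t + x)) x := by
    intro t x
    have he : (fun y => u t y)
        = fun y => c₁ * Real.exp (t - y) + c₂ * Real.exp (t + y) + c₁ ^ 2 + c₂ ^ 2 :=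
      funext fun y => hu t y
    rw [he]
    have h1 : HasDerivAt (fun y : ℝ => t - y) (-1) x := (hasDerivAt_id x).const_sub t
    have h2 : HasDerivAt (fun y : ℝ => t + y) 1 x := (hasDerivAt_id x).const_add t
    have := (((h1.exp.const_mul c₁).add (h2.exp.const_mul c₂)).add_const (c₁ ^ 2)).add_const
      (c₂ ^ 2)
    have := this
    refine this.congr_deriv ?_
    ring
  have hdX : deriv (fun y => u t y)
      = fun y : ℝ => -(c₁ * Real.exp (t - y)) + c₂ * Real.exp (t + y) :=
    funext fun y => (hX t y).deriv
  have hXX : deriv (deriv (fun y => u t y)) x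
      = c₁ * Real.exp (t - x) + c₂ * Real.exp (t + x) := by
    rw [hdX]
    have h1 : HasDerivAt (fun y : ℝ => t - y) (-1) x := (hasDerivAt_id x).const_sub t
    have h2 : HasDerivAt (fun y : ℝ => t + y) 1 x := (hasDerivAt_id x).const_add t
    have h3 : HasDerivAt (fun y : ℝ => -(c₁ * Real.exp (t - y)) + c₂ * Real.exp (t + y))
        (-(c₁ * (Real.exp (t - x) * (-1))) + c₂ * (Real.exp (t + x) * 1)) x :=
      ((h1.exp.const_mul c₁).neg).add (h2.exp.const_mul c₂)
    rw [h3.deriv]; ring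
  have hdT : deriv (fun s => u s x) t = c₁ * Real.exp (t - x) + c₂ * Real.exp (t + x) :=
    (hT t x).deriv
  have hdx : deriv (fun y => u t y) x = -(c₁ * Real.exp (t - x)) + c₂ * Real.exp (t + x) :=
    (hX t x).deriv
  refine ⟨by rw [hdT, hXX], ?_⟩
  rw [hdT, hdx, hu, Real.cosh_eq, Real.sinh_eq]
  have hq : Real.exp x ≠ 0 := (Real.exp_pos x).ne'
  have e1 : Real.exp (t - x) = Real.exp t / Real.exp x := Real.exp_sub t x
  have e2 : Real.exp (t + x) = Real.exp t * Real.exp x := Real.exp_add t x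
  have e3 : Real.exp (2 * t) = Real.exp t * Real.exp t := by
    rw [two_mul, Real.exp_add]
  have e4 : Real.exp (2 * x) = Real.exp x * Real.exp x := by
    rw [two_mul, Real.exp_add]
  have e5 : Real.exp (-(2 * x)) = 1 / (Real.exp x * Real.exp x) := by
    rw [Real.exp_neg, e4]; field_simp
  rw [e1, e2, e3, e4, e5]
  field_simp
  ring
end

section
/- For every real constant c, the function u : ℝ² → ℝ defined by u(t,x) = x³ + 6tx + c satisfies the heat equation ∂_t u = ∂_x² u, the differential constraint t·∂_t u − x·∂_x u + 3x³ = 0, and the projected compatibility condition ∂_t u − 6x = 0, at every point (t,x) ∈ ℝ². -/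
/-- For every constant `c`, the function `u(t,x) = x³ + 6tx + c`
satisfies the heat equation `∂_t u = ∂_x² u`, the Olver–Rosenau side condition
`t·∂_t u − x·∂_x u + 3x³ = 0`, and the projected condition `∂_t u − 6x = 0`. -/
theorem stmt_4 (c : ℝ) (u : ℝ → ℝ → ℝ)
    (hu : ∀ t x : ℝ, u t x = x ^ 3 + 6 * t * x + c) :
    ∀ t x : ℝ,
      deriv (fun s => u s x) t = deriv (deriv (fun y => u t y)) x ∧
      t * deriv (fun s => u s x) t - x * deriv (fun y => u t y) x + 3 * x ^ 3 = 0 ∧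
      deriv (fun s => u s x) t - 6 * x = 0 := by
  intro t x
  have h1 : (fun s => u s x) = fun s => x ^ 3 + 6 * s * x + c := by
    funext s; exact hu s x
  have h2 : (fun y => u t y) = fun y => y ^ 3 + 6 * t * y + c := by
    funext y; exact hu t y
  have d1 : deriv (fun s => u s x) t = 6 * x := by
    rw [h1]
    have : HasDerivAt (fun s : ℝ => x ^ 3 + 6 * s * x + c) (6 * x) t := by
      have := ((hasDerivAt_id t).const_mul (6:ℝ)).mul_const x
      simpa using (((this.const_add (x ^ 3)).add_const c))
    exact this.deriv
  have d2 : deriv (fun y => u t y) = fun y => 3 * y ^ 2 + 6 * t := by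
    funext y
    rw [h2]
    have : HasDerivAt (fun y : ℝ => y ^ 3 + 6 * t * y + c) (3 * y ^ 2 + 6 * t) y := by
      have h3 : HasDerivAt (fun y : ℝ => y ^ 3) (3 * y ^ 2) y := by
        simpa using hasDerivAt_pow 3 y
      have h4 : HasDerivAt (fun y : ℝ => 6 * t * y) (6 * t) y := by
        simpa using (hasDerivAt_id y).const_mul (6 * t)
      exact (h3.add h4).add_const c
    exact this.deriv
  have d3 : deriv (deriv (fun y => u t y)) x = 6 * x := by
    rw [d2]
    have : HasDerivAt (fun y : ℝ => 3 * y ^ 2 + 6 * t) (6 * x) x := by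
      have h6 := ((hasDerivAt_pow 2 x).const_mul (3 : ℝ)).add_const (6 * t)
      exact h6.congr_deriv (by push_cast; ring)
    exact this.deriv
  have d2x : deriv (fun y => u t y) x = 3 * x ^ 2 + 6 * t := by rw [d2]
  refine ⟨by rw [d1, d3], ?_, by rw [d1]; ring⟩
  rw [d1, d2x]; ring
end

section
/- Let u : ℝ² → ℝ be of class C³ in the variables (t,x), satisfy the heat equation ∂_t u = ∂_x² u everywhere, and satisfy the multiplicative-separation constraint u·∂_t∂_x u = (∂_t u)·(∂_x u) everywhere. Then u also satisfies u·∂_t² u = (∂_t u)² everywhere. -/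
/-- Partial derivative in the first variable `t`. -/
noncomputable def partialT (u : ℝ → ℝ → ℝ) : ℝ → ℝ → ℝ :=
  fun t x => deriv (fun s => u s x) t

/-- Partial derivative in the second variable `x`. -/
noncomputable def partialX (u : ℝ → ℝ → ℝ) : ℝ → ℝ → ℝ :=
  fun t x => deriv (fun y => u t y) x

private def unc (u : ℝ → ℝ → ℝ) : ℝ × ℝ → ℝ := fun p => u p.1 p.2

private lemma hasDerivAt_sliceT {F : ℝ × ℝ → ℝ} {t x : ℝ}
    (h : DifferentiableAt ℝ F (t, x)) :
    HasDerivAt (fun s => F (s, x)) (fderiv ℝ F (t, x) (1, 0)) t := by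
  have h1 : HasDerivAt (fun s : ℝ => (s, x)) ((1 : ℝ), (0 : ℝ)) t :=
    (hasDerivAt_id t).prodMk (hasDerivAt_const t x)
  exact h.hasFDerivAt.comp_hasDerivAt t h1

private lemma hasDerivAt_sliceX {F : ℝ × ℝ → ℝ} {t x : ℝ}
    (h : DifferentiableAt ℝ F (t, x)) :
    HasDerivAt (fun y => F (t, y)) (fderiv ℝ F (t, x) (0, 1)) x := by
  have h1 : HasDerivAt (fun y : ℝ => (t, y)) ((0 : ℝ), (1 : ℝ)) x :=
    (hasDerivAt_const x t).prodMk (hasDerivAt_id x)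
  exact h.hasFDerivAt.comp_hasDerivAt x h1

private lemma partialT_eq {u : ℝ → ℝ → ℝ} {t x : ℝ}
    (h : DifferentiableAt ℝ (unc u) (t, x)) :
    partialT u t x = fderiv ℝ (unc u) (t, x) (1, 0) :=
  (hasDerivAt_sliceT h).deriv

private lemma partialX_eq {u : ℝ → ℝ → ℝ} {t x : ℝ}
    (h : DifferentiableAt ℝ (unc u) (t, x)) :
    partialX u t x = fderiv ℝ (unc u) (t, x) (0, 1) :=
  (hasDerivAt_sliceX h).deriv

private lemma unc_partialX {u : ℝ → ℝ → ℝ} (h : Differentiable ℝ (unc u)) :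
    unc (partialX u) = fun p => fderiv ℝ (unc u) p (0, 1) := by
  funext p
  exact partialX_eq (h (p.1, p.2))

private lemma unc_partialT {u : ℝ → ℝ → ℝ} (h : Differentiable ℝ (unc u)) :
    unc (partialT u) = fun p => fderiv ℝ (unc u) p (1, 0) := by
  funext p
  exact partialT_eq (h (p.1, p.2))

private lemma contDiff_unc_partialX {u : ℝ → ℝ → ℝ} {n : ℕ}
    (h : ContDiff ℝ (n + 1) (unc u)) : ContDiff ℝ n (unc (partialX u)) := by
  rw [unc_partialX (h.differentiable (by simp))]
  exact (h.fderiv_right (le_refl _)).clm_apply contDiff_const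

private lemma contDiff_unc_partialT {u : ℝ → ℝ → ℝ} {n : ℕ}
    (h : ContDiff ℝ (n + 1) (unc u)) : ContDiff ℝ n (unc (partialT u)) := by
  rw [unc_partialT (h.differentiable (by simp))]
  exact (h.fderiv_right (le_refl _)).clm_apply contDiff_const

/-- Clairaut for curried partials of a C² function. -/
private lemma clairaut {g : ℝ → ℝ → ℝ} (h : ContDiff ℝ 2 (unc g)) (t x : ℝ) :
    partialT (partialX g) t x = partialX (partialT g) t x := by
  have hd : Differentiable ℝ (unc g) := h.differentiable (by norm_num)
  have hX : ContDiff ℝ 1 (unc (partialX g)) := contDiff_unc_partialX (n := 1) h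
  have hT : ContDiff ℝ 1 (unc (partialT g)) := contDiff_unc_partialT (n := 1) h
  have h1 : partialT (partialX g) t x
      = fderiv ℝ (unc (partialX g)) (t, x) (1, 0) :=
    partialT_eq (hX.differentiable one_ne_zero (t, x))
  have h2 : partialX (partialT g) t x
      = fderiv ℝ (unc (partialT g)) (t, x) (0, 1) :=
    partialX_eq (hT.differentiable one_ne_zero (t, x))
  rw [h1, h2, unc_partialX hd, unc_partialT hd]
  have hf : ContDiff ℝ 1 (fderiv ℝ (unc g)) := h.fderiv_right (le_refl _)
  have e1 : fderiv ℝ (fun p => fderiv ℝ (unc g) p ((0 : ℝ), (1 : ℝ))) (t, x)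
      = (fderiv ℝ (fderiv ℝ (unc g)) (t, x)).flip (0, 1) := by
    rw [fderiv_clm_apply (hf.differentiable one_ne_zero (t, x)) (differentiableAt_const _)]
    simp
  have e2 : fderiv ℝ (fun p => fderiv ℝ (unc g) p ((1 : ℝ), (0 : ℝ))) (t, x)
      = (fderiv ℝ (fderiv ℝ (unc g)) (t, x)).flip (1, 0) := by
    rw [fderiv_clm_apply (hf.differentiable one_ne_zero (t, x)) (differentiableAt_const _)]
    simp
  rw [e1, e2]
  have hsym := (h.contDiffAt (x := (t, x))).isSymmSndFDerivAt (by norm_num)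
  simpa using hsym (1, 0) (0, 1)

/-- A C³ solution of the heat equation `u_t = u_xx` which also
satisfies the multiplicative-separation constraint `u·u_tx = u_t·u_x`
satisfies in addition `u·u_tt = u_t²`. -/
theorem stmt_7 (u : ℝ → ℝ → ℝ)
    (hu : ContDiff ℝ 3 (fun p : ℝ × ℝ => u p.1 p.2))
    (heat : ∀ t x : ℝ, partialT u t x = partialX (partialX u) t x)
    (hG : ∀ t x : ℝ,
      u t x * partialT (partialX u) t x = partialT u t x * partialX u t x) :
    ∀ t x : ℝ, u t x * partialT (partialT u) t x = (partialT u t x) ^ 2 := by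
  intro t x
  have hu' : ContDiff ℝ 3 (unc u) := hu
  have hu2X : ContDiff ℝ 2 (unc (partialX u)) := contDiff_unc_partialX (n := 2) hu'
  have hu1TX : ContDiff ℝ 1 (unc (partialT (partialX u))) := contDiff_unc_partialT (n := 1) hu2X
  have hu2T : ContDiff ℝ 2 (unc (partialT u)) := contDiff_unc_partialT (n := 2) hu'
  -- slice differentiability in y
  have d0 : DifferentiableAt ℝ (fun y => u t y) x :=
    (hasDerivAt_sliceX ((hu'.differentiable (by norm_num)) (t, x))).differentiableAt
  have d1 : DifferentiableAt ℝ (fun y => partialT (partialX u) t y) x :=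
    (hasDerivAt_sliceX ((hu1TX.differentiable one_ne_zero) (t, x))).differentiableAt
  have d2 : DifferentiableAt ℝ (fun y => partialT u t y) x :=
    (hasDerivAt_sliceX ((hu2T.differentiable (by norm_num)) (t, x))).differentiableAt
  have d3 : DifferentiableAt ℝ (fun y => partialX u t y) x :=
    (hasDerivAt_sliceX ((hu2X.differentiable (by norm_num)) (t, x))).differentiableAt
  -- differentiate hG in x
  have key : deriv (fun y => u t y * partialT (partialX u) t y) x
      = deriv (fun y => partialT u t y * partialX u t y) x := by
    congr 1
    funext y
    exact hG t y
  rw [deriv_fun_mul d0 d1, deriv_fun_mul d2 d3] at key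
  -- identify the derivs with partialX of things
  have clU : partialX (partialT u) t x = partialT (partialX u) t x :=
    (clairaut (hu'.of_le (by norm_num)) t x).symm
  -- key becomes: u_x * u_tx + u * Px(Pt(Px u)) = Px(Pt u) * u_x + u_t * u_xx
  have key2 : u t x * partialX (partialT (partialX u)) t x
      = partialT u t x * partialX (partialX u) t x := by
    have : partialX u t x * partialT (partialX u) t x
        + u t x * partialX (partialT (partialX u)) t x
        = partialX (partialT u) t x * partialX u t x
        + partialT u t x * partialX (partialX u) t x := key
    rw [clU] at this
    linarith [this]
  -- goal: u * Pt (Pt u) = (Pt u)^2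
  have heatF : partialT u = partialX (partialX u) := by
    funext a b; exact heat a b
  have goal1 : partialT (partialT u) t x = partialX (partialT (partialX u)) t x := by
    conv_lhs => rw [heatF]
    exact clairaut hu2X t x
  rw [goal1, key2, ← heat t x]
  ring
end

section
/- Let f : ℝ → ℝ be of class C³ and let u : Ω → ℝ be of class C⁵ on an open set Ω ⊆ ℝ² (variables (t,x)), satisfying ∂_t u = ∂_x² u + f(u) on Ω. Define g : Ω → ℝ by g = (∂_x u)·(∂_x³ u) − (∂_x² u)² − f(u)·(∂_x² u) + f'(u)·(∂_x u)². Then at every point p ∈ Ω with ∂_x u(p) ≠ 0, the following identity holds: ∂_t g = ∂_x² g − (2·∂_x² u/∂_x u)·∂_x g + (2·f'(u) + 2·∂_x³ u/∂_x u)·g. (This expresses that g = 0 is a compatible differential constraint — an auxiliary integral — for the reaction–diffusion equation, for arbitrary f.) -/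
section PdHelpers

open Filter

/-- Directional derivative of a function on `ℝ × ℝ` along a vector `v`. -/
noncomputable def pd (v : ℝ × ℝ) (F : ℝ × ℝ → ℝ) : ℝ × ℝ → ℝ :=
  fun q => fderiv ℝ F q v

lemma pd_congr_nhds {F G : ℝ × ℝ → ℝ} {q : ℝ × ℝ} {v : ℝ × ℝ}
    (h : F =ᶠ[nhds q] G) : pd v F q = pd v G q := by
  simp [pd, h.fderiv_eq]

lemma pd_contDiffAt {F : ℝ × ℝ → ℝ} {q : ℝ × ℝ} {v : ℝ × ℝ} {m n : WithTop ℕ∞}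
    (h : ContDiffAt ℝ n F q) (hmn : m + 1 ≤ n) : ContDiffAt ℝ m (pd v F) q :=
  (h.fderiv_right hmn).clm_apply contDiffAt_const

lemma pd_add {F G : ℝ × ℝ → ℝ} {q : ℝ × ℝ} {v : ℝ × ℝ}
    (hF : DifferentiableAt ℝ F q) (hG : DifferentiableAt ℝ G q) :
    pd v (fun q => F q + G q) q = pd v F q + pd v G q := by
  simp [pd, fderiv_fun_add hF hG]

lemma pd_sub {F G : ℝ × ℝ → ℝ} {q : ℝ × ℝ} {v : ℝ × ℝ}
    (hF : DifferentiableAt ℝ F q) (hG : DifferentiableAt ℝ G q) :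
    pd v (fun q => F q - G q) q = pd v F q - pd v G q := by
  simp [pd, fderiv_fun_sub hF hG]

lemma pd_mul {F G : ℝ × ℝ → ℝ} {q : ℝ × ℝ} {v : ℝ × ℝ}
    (hF : DifferentiableAt ℝ F q) (hG : DifferentiableAt ℝ G q) :
    pd v (fun q => F q * G q) q = pd v F q * G q + F q * pd v G q := by
  simp [pd, fderiv_fun_mul hF hG]; ring

lemma pd_sq {F : ℝ × ℝ → ℝ} {q : ℝ × ℝ} {v : ℝ × ℝ}
    (hF : DifferentiableAt ℝ F q) :
    pd v (fun q => F q ^ 2) q = 2 * F q * pd v F q := by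
  have : (fun q => F q ^ 2) = fun q => F q * F q := by ext q; ring
  rw [this, pd_mul hF hF]; ring

lemma pd_cube {F : ℝ × ℝ → ℝ} {q : ℝ × ℝ} {v : ℝ × ℝ}
    (hF : DifferentiableAt ℝ F q) :
    pd v (fun q => F q ^ 3) q = 3 * F q ^ 2 * pd v F q := by
  have : (fun q => F q ^ 3) = fun q => F q * F q ^ 2 := by ext q; ring
  rw [this, pd_mul (G := fun q => F q ^ 2) hF (hF.pow 2), pd_sq hF]; ring

lemma pd_comp {f : ℝ → ℝ} {F : ℝ × ℝ → ℝ} {q : ℝ × ℝ} {v : ℝ × ℝ}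
    (hf : DifferentiableAt ℝ f (F q)) (hF : DifferentiableAt ℝ F q) :
    pd v (fun q => f (F q)) q = deriv f (F q) * pd v F q := by
  have h := hf.hasDerivAt.comp_hasFDerivAt q hF.hasFDerivAt
  have h2 : fderiv ℝ (fun q => f (F q)) q = deriv f (F q) • fderiv ℝ F q := h.fderiv
  simp [pd, h2]

lemma pd_swap {F : ℝ × ℝ → ℝ} {q : ℝ × ℝ} {v w : ℝ × ℝ}
    (h : ContDiffAt ℝ 2 F q) : pd v (pd w F) q = pd w (pd v F) q := by
  have hd : DifferentiableAt ℝ (fderiv ℝ F) q :=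
    (h.fderiv_right (le_refl (2:WithTop ℕ∞)) (m := 1)).differentiableAt one_ne_zero
  have hs := h.isSymmSndFDerivAt (by simp [minSmoothness_of_isRCLikeNormedField])
  have key : ∀ a b : ℝ × ℝ, pd a (pd b F) q = fderiv ℝ (fderiv ℝ F) q a b := by
    intro a b
    have h1 : HasFDerivAt (pd b F)
        (((ContinuousLinearMap.apply ℝ ℝ b)).comp (fderiv ℝ (fderiv ℝ F) q)) q :=
      (ContinuousLinearMap.apply ℝ ℝ b).hasFDerivAt.comp q hd.hasFDerivAt
    simp [pd, h1.fderiv]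
  rw [key v w, key w v, hs v w]

lemma derivX_eq {F : ℝ × ℝ → ℝ} {t x : ℝ} (h : DifferentiableAt ℝ F (t, x)) :
    deriv (fun y => F (t, y)) x = pd (0, 1) F (t, x) := by
  have h1 : HasDerivAt (fun y => (t, y) : ℝ → ℝ × ℝ) (0, 1) x :=
    (hasDerivAt_const x t).prodMk (hasDerivAt_id x)
  exact (h.hasFDerivAt.comp_hasDerivAt x h1).deriv

lemma derivT_eq {F : ℝ × ℝ → ℝ} {t x : ℝ} (h : DifferentiableAt ℝ F (t, x)) :
    deriv (fun s => F (s, x)) t = pd (1, 0) F (t, x) := by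
  have h1 : HasDerivAt (fun s => (s, x) : ℝ → ℝ × ℝ) (1, 0) t :=
    (hasDerivAt_id t).prodMk (hasDerivAt_const t x)
  exact (h.hasFDerivAt.comp_hasDerivAt t h1).deriv

lemma sliceX_congr {φ ψ : ℝ × ℝ → ℝ} {Ω : Set (ℝ × ℝ)} (hΩ : IsOpen Ω) {t x : ℝ}
    (hq : (t, x) ∈ Ω) (h : ∀ q ∈ Ω, φ q = ψ q) :
    deriv (fun y => φ (t, y)) x = deriv (fun y => ψ (t, y)) x := by
  apply Filter.EventuallyEq.deriv_eq
  have hc : Continuous (fun y => (t, y) : ℝ → ℝ × ℝ) := by continuity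
  have : (fun y => (t, y) : ℝ → ℝ × ℝ) ⁻¹' Ω ∈ nhds x :=
    (hΩ.preimage hc).mem_nhds hq
  filter_upwards [this] with y hy using h _ hy

lemma sliceT_congr {φ ψ : ℝ × ℝ → ℝ} {Ω : Set (ℝ × ℝ)} (hΩ : IsOpen Ω) {t x : ℝ}
    (hq : (t, x) ∈ Ω) (h : ∀ q ∈ Ω, φ q = ψ q) :
    deriv (fun s => φ (s, x)) t = deriv (fun s => ψ (s, x)) t := by
  apply Filter.EventuallyEq.deriv_eq
  have hc : Continuous (fun s => (s, x) : ℝ → ℝ × ℝ) := by continuity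
  have : (fun s => (s, x) : ℝ → ℝ × ℝ) ⁻¹' Ω ∈ nhds t :=
    (hΩ.preimage hc).mem_nhds hq
  filter_upwards [this] with s hs using h _ hs

/-- Directional derivative of the auxiliary integral expression. -/
lemma pd_G (f : ℝ → ℝ) (U U1 U2 U3 : ℝ × ℝ → ℝ) (v q : ℝ × ℝ)
    (dU : DifferentiableAt ℝ U q) (d1 : DifferentiableAt ℝ U1 q)
    (d2 : DifferentiableAt ℝ U2 q) (d3 : DifferentiableAt ℝ U3 q)
    (hfd : DifferentiableAt ℝ f (U q)) (hfd1 : DifferentiableAt ℝ (deriv f) (U q)) :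
    pd v (fun p => U1 p * U3 p - U2 p ^ 2 - f (U p) * U2 p + deriv f (U p) * U1 p ^ 2) q
    = pd v U1 q * U3 q + U1 q * pd v U3 q - 2 * U2 q * pd v U2 q
      - deriv f (U q) * pd v U q * U2 q - f (U q) * pd v U2 q
      + deriv (deriv f) (U q) * pd v U q * U1 q ^ 2
      + 2 * deriv f (U q) * U1 q * pd v U1 q := by
  have e1 : pd v (fun p => U1 p * U3 p) q = pd v U1 q * U3 q + U1 q * pd v U3 q := pd_mul d1 d3
  have e2 : pd v (fun p => U2 p ^ 2) q = 2 * U2 q * pd v U2 q := pd_sq d2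
  have e4 : pd v (fun p => f (U p)) q = deriv f (U q) * pd v U q := pd_comp hfd dU
  have e3 : pd v (fun p => f (U p) * U2 p) q
      = pd v (fun p => f (U p)) q * U2 q + f (U q) * pd v U2 q :=
    pd_mul (F := fun p => f (U p)) (hfd.comp q dU) d2
  have e5 : pd v (fun p => deriv f (U p)) q = deriv (deriv f) (U q) * pd v U q :=
    pd_comp hfd1 dU
  have e7 : pd v (fun p => U1 p ^ 2) q = 2 * U1 q * pd v U1 q := pd_sq d1
  have e6 : pd v (fun p => deriv f (U p) * U1 p ^ 2) q
      = pd v (fun p => deriv f (U p)) q * U1 q ^ 2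
        + deriv f (U q) * pd v (fun p => U1 p ^ 2) q :=
    pd_mul (F := fun p => deriv f (U p)) (G := fun p => U1 p ^ 2) (hfd1.comp q dU) (d1.pow 2)
  calc pd v (fun p => U1 p * U3 p - U2 p ^ 2 - f (U p) * U2 p + deriv f (U p) * U1 p ^ 2) q
      = pd v (fun p => U1 p * U3 p - U2 p ^ 2 - f (U p) * U2 p) q
        + pd v (fun p => deriv f (U p) * U1 p ^ 2) q :=
        pd_add (by fun_prop) (by fun_prop)
    _ = pd v (fun p => U1 p * U3 p - U2 p ^ 2) q - pd v (fun p => f (U p) * U2 p) q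
        + pd v (fun p => deriv f (U p) * U1 p ^ 2) q := by
        rw [pd_sub (by fun_prop) (by fun_prop)]
    _ = pd v (fun p => U1 p * U3 p) q - pd v (fun p => U2 p ^ 2) q
        - pd v (fun p => f (U p) * U2 p) q
        + pd v (fun p => deriv f (U p) * U1 p ^ 2) q := by
        rw [pd_sub (by fun_prop) (by fun_prop)]
    _ = _ := by rw [e1, e2, e3, e4, e6, e5, e7]; ring

/-- Directional derivative of the x-derivative of the auxiliary integral expression. -/
lemma pd_E (f : ℝ → ℝ) (U U1 U2 U3 U4 : ℝ × ℝ → ℝ) (v q : ℝ × ℝ)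
    (dU : DifferentiableAt ℝ U q) (d1 : DifferentiableAt ℝ U1 q)
    (d2 : DifferentiableAt ℝ U2 q) (d3 : DifferentiableAt ℝ U3 q)
    (d4 : DifferentiableAt ℝ U4 q)
    (hfd : DifferentiableAt ℝ f (U q)) (hfd1 : DifferentiableAt ℝ (deriv f) (U q))
    (hfd2 : DifferentiableAt ℝ (deriv (deriv f)) (U q)) :
    pd v (fun p => U1 p * U4 p - U2 p * U3 p + deriv f (U p) * U1 p * U2 p
        - f (U p) * U3 p + deriv (deriv f) (U p) * U1 p ^ 3) q
    = pd v U1 q * U4 q + U1 q * pd v U4 q - (pd v U2 q * U3 q + U2 q * pd v U3 q)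
      + ((deriv (deriv f) (U q) * pd v U q * U1 q + deriv f (U q) * pd v U1 q) * U2 q
          + deriv f (U q) * U1 q * pd v U2 q)
      - (deriv f (U q) * pd v U q * U3 q + f (U q) * pd v U3 q)
      + (deriv (deriv (deriv f)) (U q) * pd v U q * U1 q ^ 3
          + deriv (deriv f) (U q) * (3 * U1 q ^ 2 * pd v U1 q)) := by
  have e1 : pd v (fun p => U1 p * U4 p) q = pd v U1 q * U4 q + U1 q * pd v U4 q := pd_mul d1 d4
  have e2 : pd v (fun p => U2 p * U3 p) q = pd v U2 q * U3 q + U2 q * pd v U3 q := pd_mul d2 d3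
  have e4 : pd v (fun p => f (U p)) q = deriv f (U q) * pd v U q := pd_comp hfd dU
  have e5 : pd v (fun p => deriv f (U p)) q = deriv (deriv f) (U q) * pd v U q :=
    pd_comp hfd1 dU
  have e5' : pd v (fun p => deriv (deriv f) (U p)) q
      = deriv (deriv (deriv f)) (U q) * pd v U q := pd_comp hfd2 dU
  have e3a : pd v (fun p => deriv f (U p) * U1 p) q
      = pd v (fun p => deriv f (U p)) q * U1 q + deriv f (U q) * pd v U1 q :=
    pd_mul (F := fun p => deriv f (U p)) (hfd1.comp q dU) d1
  have e3 : pd v (fun p => deriv f (U p) * U1 p * U2 p) q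
      = pd v (fun p => deriv f (U p) * U1 p) q * U2 q
        + deriv f (U q) * U1 q * pd v U2 q :=
    pd_mul (F := fun p => deriv f (U p) * U1 p) (by fun_prop) d2
  have e6 : pd v (fun p => f (U p) * U3 p) q
      = pd v (fun p => f (U p)) q * U3 q + f (U q) * pd v U3 q :=
    pd_mul (F := fun p => f (U p)) (hfd.comp q dU) d3
  have e8 : pd v (fun p => U1 p ^ 3) q = 3 * U1 q ^ 2 * pd v U1 q := pd_cube d1
  have e7 : pd v (fun p => deriv (deriv f) (U p) * U1 p ^ 3) q
      = pd v (fun p => deriv (deriv f) (U p)) q * U1 q ^ 3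
        + deriv (deriv f) (U q) * pd v (fun p => U1 p ^ 3) q :=
    pd_mul (F := fun p => deriv (deriv f) (U p)) (G := fun p => U1 p ^ 3)
      (hfd2.comp q dU) (d1.pow 3)
  calc pd v (fun p => U1 p * U4 p - U2 p * U3 p + deriv f (U p) * U1 p * U2 p
        - f (U p) * U3 p + deriv (deriv f) (U p) * U1 p ^ 3) q
      = pd v (fun p => U1 p * U4 p - U2 p * U3 p + deriv f (U p) * U1 p * U2 p
          - f (U p) * U3 p) q + pd v (fun p => deriv (deriv f) (U p) * U1 p ^ 3) q :=
        pd_add (by fun_prop) (by fun_prop)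
    _ = pd v (fun p => U1 p * U4 p - U2 p * U3 p + deriv f (U p) * U1 p * U2 p) q
        - pd v (fun p => f (U p) * U3 p) q
        + pd v (fun p => deriv (deriv f) (U p) * U1 p ^ 3) q := by
        rw [pd_sub (by fun_prop) (by fun_prop)]
    _ = pd v (fun p => U1 p * U4 p - U2 p * U3 p) q
        + pd v (fun p => deriv f (U p) * U1 p * U2 p) q
        - pd v (fun p => f (U p) * U3 p) q
        + pd v (fun p => deriv (deriv f) (U p) * U1 p ^ 3) q := by
        rw [pd_add (by fun_prop) (by fun_prop)]
    _ = pd v (fun p => U1 p * U4 p) q - pd v (fun p => U2 p * U3 p) q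
        + pd v (fun p => deriv f (U p) * U1 p * U2 p) q
        - pd v (fun p => f (U p) * U3 p) q
        + pd v (fun p => deriv (deriv f) (U p) * U1 p ^ 3) q := by
        rw [pd_sub (by fun_prop) (by fun_prop)]
    _ = _ := by rw [e1, e2, e3, e3a, e5, e6, e4, e7, e5', e8]

end PdHelpers

/-- Let `u` be a C⁵ solution of the reaction–diffusion equation
`u_t = u_xx + f(u)` on an open set `Ω ⊆ ℝ²` (with `f` of class C³), and let
`g = u_x·u_xxx − u_xx² − f(u)·u_xx + f'(u)·u_x²`. Then wherever `u_x ≠ 0` on `Ω`,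
`g_t = g_xx − (2·u_xx/u_x)·g_x + (2·f'(u) + 2·u_xxx/u_x)·g`; hence `g = 0` is a
compatible differential constraint (auxiliary integral) for arbitrary `f`. -/
theorem stmt_9 (f : ℝ → ℝ) (hf : ContDiff ℝ 3 f)
    (Ω : Set (ℝ × ℝ)) (hΩ : IsOpen Ω) (u : ℝ → ℝ → ℝ)
    (hu : ContDiffOn ℝ 5 (fun p : ℝ × ℝ => u p.1 p.2) Ω)
    (heq : ∀ t x : ℝ, (t, x) ∈ Ω →
      partialT u t x = partialX (partialX u) t x + f (u t x))
    (g : ℝ → ℝ → ℝ)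
    (hg : ∀ t x : ℝ,
      g t x = partialX u t x * partialX (partialX (partialX u)) t x
        - (partialX (partialX u) t x) ^ 2
        - f (u t x) * partialX (partialX u) t x
        + deriv f (u t x) * (partialX u t x) ^ 2) :
    ∀ t x : ℝ, (t, x) ∈ Ω → partialX u t x ≠ 0 →
      partialT g t x
        = partialX (partialX g) t x
          - (2 * partialX (partialX u) t x / partialX u t x) * partialX g t x
          + (2 * deriv f (u t x)
              + 2 * partialX (partialX (partialX u)) t x / partialX u t x) * g t x := by

  intro t x hq0 hne0
  set U : ℝ × ℝ → ℝ := fun p => u p.1 p.2 with hUdef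
  set U1 : ℝ × ℝ → ℝ := pd (0, 1) U with h1d
  set U2 : ℝ × ℝ → ℝ := pd (0, 1) U1 with h2d
  set U3 : ℝ × ℝ → ℝ := pd (0, 1) U2 with h3d
  set U4 : ℝ × ℝ → ℝ := pd (0, 1) U3 with h4d
  set U5 : ℝ × ℝ → ℝ := pd (0, 1) U4 with h5d
  have hUc : ∀ q ∈ Ω, ContDiffAt ℝ 5 U q := fun q hq => (hu q hq).contDiffAt (hΩ.mem_nhds hq)
  have h1c : ∀ q ∈ Ω, ContDiffAt ℝ 4 U1 q := fun q hq => pd_contDiffAt (hUc q hq) (by norm_num)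
  have h2c : ∀ q ∈ Ω, ContDiffAt ℝ 3 U2 q := fun q hq => pd_contDiffAt (h1c q hq) (by norm_num)
  have h3c : ∀ q ∈ Ω, ContDiffAt ℝ 2 U3 q := fun q hq => pd_contDiffAt (h2c q hq) (by norm_num)
  have h4c : ∀ q ∈ Ω, ContDiffAt ℝ 1 U4 q := fun q hq => pd_contDiffAt (h3c q hq) (by norm_num)
  have dU : ∀ q ∈ Ω, DifferentiableAt ℝ U q :=
    fun q hq => (hUc q hq).differentiableAt (by norm_num)
  have d1 : ∀ q ∈ Ω, DifferentiableAt ℝ U1 q :=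
    fun q hq => (h1c q hq).differentiableAt (by norm_num)
  have d2 : ∀ q ∈ Ω, DifferentiableAt ℝ U2 q :=
    fun q hq => (h2c q hq).differentiableAt (by norm_num)
  have d3 : ∀ q ∈ Ω, DifferentiableAt ℝ U3 q :=
    fun q hq => (h3c q hq).differentiableAt (by norm_num)
  have d4 : ∀ q ∈ Ω, DifferentiableAt ℝ U4 q :=
    fun q hq => (h4c q hq).differentiableAt one_ne_zero
  have hfd : Differentiable ℝ f := hf.differentiable (by norm_num)
  have hf1 : ContDiff ℝ 2 (deriv f) := by
    have e : (2 + 1 : WithTop ℕ∞) = 3 := by norm_num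
    exact (contDiff_succ_iff_deriv.mp (e ▸ hf)).2.2
  have hfd1 : Differentiable ℝ (deriv f) := hf1.differentiable (by norm_num)
  have hf2 : ContDiff ℝ 1 (deriv (deriv f)) := by
    have e : (1 + 1 : WithTop ℕ∞) = 2 := by norm_num
    exact (contDiff_succ_iff_deriv.mp (e ▸ hf1)).2.2
  have hfd2 : Differentiable ℝ (deriv (deriv f)) := hf2.differentiable one_ne_zero
  have eE : ∀ {φ ψ : ℝ × ℝ → ℝ}, (∀ q ∈ Ω, φ q = ψ q) →
      ∀ {q : ℝ × ℝ}, q ∈ Ω → φ =ᶠ[nhds q] ψ :=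
    fun h _ hq => Filter.eventuallyEq_of_mem (hΩ.mem_nhds hq) h
  -- translations of the slice derivatives of u
  have eX1 : ∀ a b : ℝ, (a, b) ∈ Ω → partialX u a b = U1 (a, b) := by
    intro a b hq
    exact derivX_eq (dU _ hq)
  have eX2 : ∀ a b : ℝ, (a, b) ∈ Ω → partialX (partialX u) a b = U2 (a, b) := by
    intro a b hq
    have h := sliceX_congr (φ := fun q => partialX u q.1 q.2) (ψ := U1) hΩ hq
      (fun q hq' => eX1 q.1 q.2 hq')
    calc partialX (partialX u) a b = deriv (fun y => partialX u a y) b := rfl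
      _ = deriv (fun y => U1 (a, y)) b := h
      _ = pd (0, 1) U1 (a, b) := derivX_eq (d1 _ hq)
  have eX3 : ∀ a b : ℝ, (a, b) ∈ Ω →
      partialX (partialX (partialX u)) a b = U3 (a, b) := by
    intro a b hq
    have h := sliceX_congr (φ := fun q => partialX (partialX u) q.1 q.2) (ψ := U2) hΩ hq
      (fun q hq' => eX2 q.1 q.2 hq')
    calc partialX (partialX (partialX u)) a b
        = deriv (fun y => partialX (partialX u) a y) b := rfl
      _ = deriv (fun y => U2 (a, y)) b := h
      _ = pd (0, 1) U2 (a, b) := derivX_eq (d2 _ hq)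
  -- the PDE in pd form
  have hpde : ∀ a b : ℝ, (a, b) ∈ Ω →
      pd (1, 0) U (a, b) = U2 (a, b) + f (U (a, b)) := by
    intro a b hq
    have h1 : partialT u a b = pd (1, 0) U (a, b) := derivT_eq (dU _ hq)
    have h2 := heq a b hq
    rw [h1, eX2 a b hq] at h2
    exact h2
  -- time derivatives of the spatial derivatives
  have t1 : ∀ a b : ℝ, (a, b) ∈ Ω →
      pd (1, 0) U1 (a, b) = U3 (a, b) + deriv f (U (a, b)) * U1 (a, b) := by
    intro a b hq
    have hs : pd (1, 0) U1 (a, b) = pd (0, 1) (pd (1, 0) U) (a, b) := by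
      rw [h1d]; exact pd_swap ((hUc _ hq).of_le (by norm_num))
    rw [hs, pd_congr_nhds (eE (φ := pd (1, 0) U) (ψ := fun p => U2 p + f (U p))
      (fun q hq' => hpde q.1 q.2 hq') hq)]
    rw [pd_add (G := fun p => f (U p)) (d2 _ hq) ((hfd (U (a, b))).comp _ (dU _ hq)),
      pd_comp (hfd _) (dU _ hq), ← h3d]
  have t2 : ∀ a b : ℝ, (a, b) ∈ Ω →
      pd (1, 0) U2 (a, b) = U4 (a, b)
        + (deriv (deriv f) (U (a, b)) * U1 (a, b) * U1 (a, b)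
            + deriv f (U (a, b)) * U2 (a, b)) := by
    intro a b hq
    have hs : pd (1, 0) U2 (a, b) = pd (0, 1) (pd (1, 0) U1) (a, b) := by
      rw [h2d]; exact pd_swap ((h1c _ hq).of_le (by norm_num))
    rw [hs, pd_congr_nhds (eE (φ := pd (1, 0) U1)
      (ψ := fun p => U3 p + deriv f (U p) * U1 p) (fun q hq' => t1 q.1 q.2 hq') hq)]
    rw [pd_add (G := fun p => deriv f (U p) * U1 p) (d3 _ hq)
        (((hfd1 (U (a, b))).comp _ (dU _ hq)).mul (d1 _ hq)),
      pd_mul (F := fun p => deriv f (U p)) (G := U1)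
        ((hfd1 _).comp _ (dU _ hq)) (d1 _ hq),
      pd_comp (hfd1 _) (dU _ hq), ← h4d, ← h2d]
  have t3 : ∀ a b : ℝ, (a, b) ∈ Ω →
      pd (1, 0) U3 (a, b) = U5 (a, b)
        + (((deriv (deriv (deriv f)) (U (a, b)) * U1 (a, b) * U1 (a, b)
              + deriv (deriv f) (U (a, b)) * U2 (a, b)) * U1 (a, b)
            + deriv (deriv f) (U (a, b)) * U1 (a, b) * U2 (a, b))
          + (deriv (deriv f) (U (a, b)) * U1 (a, b) * U2 (a, b)
              + deriv f (U (a, b)) * U3 (a, b))) := by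
    intro a b hq
    have hs : pd (1, 0) U3 (a, b) = pd (0, 1) (pd (1, 0) U2) (a, b) := by
      rw [h3d]; exact pd_swap ((h2c _ hq).of_le (by norm_num))
    rw [hs, pd_congr_nhds (eE (φ := pd (1, 0) U2)
      (ψ := fun p => U4 p + (deriv (deriv f) (U p) * U1 p * U1 p + deriv f (U p) * U2 p))
      (fun q hq' => t2 q.1 q.2 hq') hq)]
    rw [pd_add (G := fun p => deriv (deriv f) (U p) * U1 p * U1 p + deriv f (U p) * U2 p)
        (d4 _ hq)
        (((((hfd2 (U (a, b))).comp _ (dU _ hq)).mul (d1 _ hq)).mul (d1 _ hq)).add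
          (((hfd1 (U (a, b))).comp _ (dU _ hq)).mul (d2 _ hq))),
      pd_add (F := fun p => deriv (deriv f) (U p) * U1 p * U1 p)
        (G := fun p => deriv f (U p) * U2 p)
        ((((hfd2 (U (a, b))).comp _ (dU _ hq)).mul (d1 _ hq)).mul (d1 _ hq))
        (((hfd1 (U (a, b))).comp _ (dU _ hq)).mul (d2 _ hq)),
      pd_mul (F := fun p => deriv (deriv f) (U p) * U1 p) (G := U1)
        (((hfd2 (U (a, b))).comp _ (dU _ hq)).mul (d1 _ hq)) (d1 _ hq),
      pd_mul (F := fun p => deriv (deriv f) (U p)) (G := U1)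
        ((hfd2 _).comp _ (dU _ hq)) (d1 _ hq),
      pd_comp (hfd2 _) (dU _ hq),
      pd_mul (F := fun p => deriv f (U p)) (G := U2)
        ((hfd1 _).comp _ (dU _ hq)) (d2 _ hq),
      pd_comp (hfd1 _) (dU _ hq), ← h5d, ← h2d, ← h3d]
  -- the auxiliary integral expression and its first x-derivative
  set G : ℝ × ℝ → ℝ := fun p =>
    U1 p * U3 p - U2 p ^ 2 - f (U p) * U2 p + deriv f (U p) * U1 p ^ 2 with hGdef
  set E1 : ℝ × ℝ → ℝ := fun p =>
    U1 p * U4 p - U2 p * U3 p + deriv f (U p) * U1 p * U2 p - f (U p) * U3 p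
      + deriv (deriv f) (U p) * U1 p ^ 3 with hE1def
  have hGc : ∀ q ∈ Ω, ContDiffAt ℝ 2 G q := by
    intro q hq
    rw [hGdef]
    have c1 := (h1c q hq).of_le (show (2 : WithTop ℕ∞) ≤ 4 by norm_num)
    have c2 := (h2c q hq).of_le (show (2 : WithTop ℕ∞) ≤ 3 by norm_num)
    have c3 := h3c q hq
    have cU := (hUc q hq).of_le (show (2 : WithTop ℕ∞) ≤ 5 by norm_num)
    have cf : ContDiffAt ℝ 2 (fun p => f (U p)) q :=
      (hf.of_le (by norm_num)).contDiffAt.comp q cU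
    have cf1 : ContDiffAt ℝ 2 (fun p => deriv f (U p)) q := hf1.contDiffAt.comp q cU
    exact (((c1.mul c3).sub (c2.pow 2)).sub (cf.mul c2)).add (cf1.mul (c1.pow 2))
  have dG : ∀ q ∈ Ω, DifferentiableAt ℝ G q :=
    fun q hq => (hGc q hq).differentiableAt two_ne_zero
  have dXG : ∀ q ∈ Ω, DifferentiableAt ℝ (pd (0, 1) G) q :=
    fun q hq => (pd_contDiffAt (hGc q hq) (by norm_num)).differentiableAt one_ne_zero
  have hgΩ : ∀ a b : ℝ, (a, b) ∈ Ω → g a b = G (a, b) := by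
    intro a b hq
    rw [hg a b, eX1 a b hq, eX2 a b hq, eX3 a b hq]
  have hXg : ∀ a b : ℝ, (a, b) ∈ Ω → partialX g a b = pd (0, 1) G (a, b) := by
    intro a b hq
    have h := sliceX_congr (φ := fun q => g q.1 q.2) (ψ := G) hΩ hq
      (fun q hq' => hgΩ q.1 q.2 hq')
    calc partialX g a b = deriv (fun y => g a y) b := rfl
      _ = deriv (fun y => G (a, y)) b := h
      _ = pd (0, 1) G (a, b) := derivX_eq (dG _ hq)
  have hE1Ω : ∀ a b : ℝ, (a, b) ∈ Ω → pd (0, 1) G (a, b) = E1 (a, b) := by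
    intro a b hq
    rw [hGdef, pd_G f U U1 U2 U3 (0, 1) (a, b) (dU _ hq) (d1 _ hq) (d2 _ hq) (d3 _ hq)
      (hfd _) (hfd1 _), ← h1d, ← h2d, ← h3d, ← h4d]
    simp only [hE1def]; ring
  have hTg : partialT g t x = pd (1, 0) G (t, x) := by
    have h := sliceT_congr (φ := fun q => g q.1 q.2) (ψ := G) hΩ hq0
      (fun q hq' => hgΩ q.1 q.2 hq')
    calc partialT g t x = deriv (fun s => g s x) t := rfl
      _ = deriv (fun s => G (s, x)) t := h
      _ = pd (1, 0) G (t, x) := derivT_eq (dG _ hq0)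
  have hXXg : partialX (partialX g) t x = pd (0, 1) (pd (0, 1) G) (t, x) := by
    have h := sliceX_congr (φ := fun q => partialX g q.1 q.2) (ψ := pd (0, 1) G) hΩ hq0
      (fun q hq' => hXg q.1 q.2 hq')
    calc partialX (partialX g) t x = deriv (fun y => partialX g t y) x := rfl
      _ = deriv (fun y => pd (0, 1) G (t, y)) x := h
      _ = pd (0, 1) (pd (0, 1) G) (t, x) := derivX_eq (dXG _ hq0)
  have hXX2 : pd (0, 1) (pd (0, 1) G) (t, x) = pd (0, 1) E1 (t, x) :=
    pd_congr_nhds (eE (φ := pd (0, 1) G) (ψ := E1) (fun q hq => hE1Ω q.1 q.2 hq) hq0)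
  have hE2 : pd (0, 1) E1 (t, x)
      = U2 (t, x) * U4 (t, x) + U1 (t, x) * U5 (t, x)
        - (U3 (t, x) * U3 (t, x) + U2 (t, x) * U4 (t, x))
        + ((deriv (deriv f) (U (t, x)) * U1 (t, x) * U1 (t, x)
              + deriv f (U (t, x)) * U2 (t, x)) * U2 (t, x)
            + deriv f (U (t, x)) * U1 (t, x) * U3 (t, x))
        - (deriv f (U (t, x)) * U1 (t, x) * U3 (t, x) + f (U (t, x)) * U4 (t, x))
        + (deriv (deriv (deriv f)) (U (t, x)) * U1 (t, x) * U1 (t, x) ^ 3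
            + deriv (deriv f) (U (t, x)) * (3 * U1 (t, x) ^ 2 * U2 (t, x))) := by
    rw [hE1def, pd_E f U U1 U2 U3 U4 (0, 1) (t, x) (dU _ hq0) (d1 _ hq0) (d2 _ hq0)
      (d3 _ hq0) (d4 _ hq0) (hfd _) (hfd1 _) (hfd2 _), ← h1d, ← h2d, ← h3d, ← h4d, ← h5d]
  have hTval : pd (1, 0) G (t, x)
      = pd (1, 0) U1 (t, x) * U3 (t, x) + U1 (t, x) * pd (1, 0) U3 (t, x)
        - 2 * U2 (t, x) * pd (1, 0) U2 (t, x)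
        - deriv f (U (t, x)) * pd (1, 0) U (t, x) * U2 (t, x)
        - f (U (t, x)) * pd (1, 0) U2 (t, x)
        + deriv (deriv f) (U (t, x)) * pd (1, 0) U (t, x) * U1 (t, x) ^ 2
        + 2 * deriv f (U (t, x)) * U1 (t, x) * pd (1, 0) U1 (t, x) := by
    rw [hGdef]
    exact pd_G f U U1 U2 U3 (1, 0) (t, x) (dU _ hq0) (d1 _ hq0) (d2 _ hq0) (d3 _ hq0)
      (hfd _) (hfd1 _)
  -- assemble
  rw [eX1 t x hq0] at hne0
  rw [hTg, hTval, hpde t x hq0, t1 t x hq0, t2 t x hq0, t3 t x hq0, hXXg, hXX2, hE2,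
    eX1 t x hq0, eX2 t x hq0, eX3 t x hq0, hXg t x hq0, hE1Ω t x hq0, hgΩ t x hq0,
    show u t x = U (t, x) from rfl]
  simp only [hE1def, hGdef]
  field_simp
  ring
end

section
/- Let f₁, f₂ : ℝ → ℝ be of class C² and g₁, g₂ : ℝ → ℝ be of class C¹, and define u(t,x) = f₁(t)·g₁(x) + f₂(t)·g₂(x). Then with p = f₁, at every point (t,x) ∈ ℝ²: (∂_t∂_x u · u − ∂_t u · ∂_x u)·p''(t) + (∂_x u · ∂_t² u − ∂_t²∂_x u · u)·p'(t) + (∂_t²∂_x u · ∂_t u − ∂_t² u · ∂_t∂_x u)·p(t) = 0. -/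
/-- For the two-term separation ansatz
`u(t,x) = f₁(t)·g₁(x) + f₂(t)·g₂(x)` (with `f₁, f₂` of class C² and `g₁, g₂` of
class C¹), the mixed ansatz-constraint
`(u_tx·u − u_t·u_x)·p'' + (u_x·u_tt − u_ttx·u)·p' + (u_ttx·u_t − u_tt·u_tx)·p = 0`
holds everywhere with `p = f₁`. -/
theorem stmt_14 (f₁ f₂ g₁ g₂ : ℝ → ℝ)
    (hf₁ : ContDiff ℝ 2 f₁) (hf₂ : ContDiff ℝ 2 f₂)
    (hg₁ : ContDiff ℝ 1 g₁) (hg₂ : ContDiff ℝ 1 g₂)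
    (u : ℝ → ℝ → ℝ) (hu : ∀ t x : ℝ, u t x = f₁ t * g₁ x + f₂ t * g₂ x) :
    ∀ t x : ℝ,
      (partialT (partialX u) t x * u t x - partialT u t x * partialX u t x)
          * deriv (deriv f₁) t
      + (partialX u t x * partialT (partialT u) t x
          - partialT (partialT (partialX u)) t x * u t x) * deriv f₁ t
      + (partialT (partialT (partialX u)) t x * partialT u t x
          - partialT (partialT u) t x * partialT (partialX u) t x) * f₁ t = 0 := by
  have hdf₁ : Differentiable ℝ f₁ := hf₁.differentiable (by norm_num)
  have hdf₂ : Differentiable ℝ f₂ := hf₂.differentiable (by norm_num)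
  have hdf₁' : Differentiable ℝ (deriv f₁) :=
    (hf₁.iterate_deriv' 1 1).differentiable (by norm_num)
  have hdf₂' : Differentiable ℝ (deriv f₂) :=
    (hf₂.iterate_deriv' 1 1).differentiable (by norm_num)
  have hdg₁ : Differentiable ℝ g₁ := hg₁.differentiable (by norm_num)
  have hdg₂ : Differentiable ℝ g₂ := hg₂.differentiable (by norm_num)
  -- u_x
  have hX : ∀ t x : ℝ, partialX u t x = f₁ t * deriv g₁ x + f₂ t * deriv g₂ x := by
    intro t x
    have : (fun y => u t y) = fun y => f₁ t * g₁ y + f₂ t * g₂ y := funext fun y => hu t y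
    simp only [partialX, this]
    rw [deriv_fun_add ((hdg₁ x).const_mul _) ((hdg₂ x).const_mul _),
        deriv_const_mul _ (hdg₁ x), deriv_const_mul _ (hdg₂ x)]
  -- u_t
  have hT : ∀ t x : ℝ, partialT u t x = deriv f₁ t * g₁ x + deriv f₂ t * g₂ x := by
    intro t x
    have : (fun s => u s x) = fun s => f₁ s * g₁ x + f₂ s * g₂ x := funext fun s => hu s x
    simp only [partialT, this]
    rw [deriv_fun_add ((hdf₁ t).mul_const _) ((hdf₂ t).mul_const _),
        deriv_mul_const (hdf₁ t), deriv_mul_const (hdf₂ t)]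
  -- u_tt
  have hTT : ∀ t x : ℝ, partialT (partialT u) t x
      = deriv (deriv f₁) t * g₁ x + deriv (deriv f₂) t * g₂ x := by
    intro t x
    have : (fun s => partialT u s x) = fun s => deriv f₁ s * g₁ x + deriv f₂ s * g₂ x :=
      funext fun s => hT s x
    show deriv (fun s => partialT u s x) t = _
    rw [this]
    rw [deriv_fun_add ((hdf₁' t).mul_const _) ((hdf₂' t).mul_const _),
        deriv_mul_const (hdf₁' t), deriv_mul_const (hdf₂' t)]
  -- u_tx
  have hTX : ∀ t x : ℝ, partialT (partialX u) t x
      = deriv f₁ t * deriv g₁ x + deriv f₂ t * deriv g₂ x := by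
    intro t x
    have : (fun s => partialX u s x) = fun s => f₁ s * deriv g₁ x + f₂ s * deriv g₂ x :=
      funext fun s => hX s x
    show deriv (fun s => partialX u s x) t = _
    rw [this]
    rw [deriv_fun_add ((hdf₁ t).mul_const _) ((hdf₂ t).mul_const _),
        deriv_mul_const (hdf₁ t), deriv_mul_const (hdf₂ t)]
  -- u_ttx
  have hTTX : ∀ t x : ℝ, partialT (partialT (partialX u)) t x
      = deriv (deriv f₁) t * deriv g₁ x + deriv (deriv f₂) t * deriv g₂ x := by
    intro t x
    have : (fun s => partialT (partialX u) s x)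
        = fun s => deriv f₁ s * deriv g₁ x + deriv f₂ s * deriv g₂ x :=
      funext fun s => hTX s x
    show deriv (fun s => partialT (partialX u) s x) t = _
    rw [this]
    rw [deriv_fun_add ((hdf₁' t).mul_const _) ((hdf₂' t).mul_const _),
        deriv_mul_const (hdf₁' t), deriv_mul_const (hdf₂' t)]
  intro t x
  rw [hX, hT, hTT, hTX, hTTX, hu]
  ring
end
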